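/- Let 𝔥₁ ⊆ 𝔥₂ be compact Lie algebras of equal rank with a common Cartan subalgebra 𝔱. If α and β are roots of 𝔥₁ (with respect to 𝔱) and α + β is a root of 𝔥₂, then α + β is a root of 𝔥₁. -/

import Mathlib

open LieAlgebra

/-- The root space `(𝔥₁)_α` of a subalgebra `𝔥₁ = N` of `𝔥₂ = L` (with respect to the
common Cartan subalgebra `H = 𝔱`), i.e. the intersection of the ambient root space
`(𝔥₂)_α` with `𝔥₁`. -/
noncomputable def rootSpaceIn {K L : Type*} [Field K] [LieRing L] [LieAlgebra K L]
    (H : LieSubalgebra K L) [LieRing.IsNilpotent H]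
    (N : LieSubalgebra K L) (α : H → K) : Submodule K L :=
  (rootSpace H α).toSubmodule ⊓ N.toSubmodule

/-- `α` is a root of the subalgebra `N ⊆ L` with respect to the Cartan subalgebra
`H ⊆ N`. -/
def IsRootOf {K L : Type*} [Field K] [LieRing L] [LieAlgebra K L]
    (H : LieSubalgebra K L) [LieRing.IsNilpotent H]
    (N : LieSubalgebra K L) (α : H → K) : Prop :=
  α ≠ 0 ∧ rootSpaceIn H N α ≠ ⊥

/-- A nonzero submodule of a one-dimensional submodule equals it. -/
lemma aux_eq_of_one_dim {K L : Type*} [Field K] [AddCommGroup L] [Module K L]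
    (W S : Submodule K L) (h1 : Module.finrank K W = 1) (hle : S ≤ W) (hne : S ≠ ⊥) :
    S = W := by
  haveI : Module.Finite K W := Module.finite_of_finrank_eq_succ h1
  have hfin : Module.finrank K S ≤ Module.finrank K W := Submodule.finrank_mono hle
  have : Nontrivial S := Submodule.nontrivial_iff_ne_bot.mpr hne
  have hpos : 0 < Module.finrank K S := by
    have : Module.Finite K S :=
      Module.Finite.of_injective (Submodule.inclusion hle) (Submodule.inclusion_injective hle)
    exact Module.finrank_pos
  exact Submodule.eq_of_le_of_finrank_le hle (by omega)

lemma rootSpaceIn_top {K L : Type*} [Field K] [LieRing L] [LieAlgebra K L]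
    (H : LieSubalgebra K L) [LieRing.IsNilpotent H] (α : H → K) :
    rootSpaceIn H ⊤ α = (rootSpace H α).toSubmodule := by
  simp [rootSpaceIn]

/-- Let `𝔥₁ ⊆ 𝔥₂ = L` be (complexified) compact Lie algebras of equal rank, with a
common Cartan subalgebra `H`.  Compactness is encoded by its two standard consequences:
root spaces are one-dimensional, and `[(𝔥₂)_α, (𝔥₂)_β] = (𝔥₂)_{α+β}` whenever `α`, `β`
and `α+β` are roots.  If `α` and `β` are roots of `𝔥₁` and `α + β` is a root of `𝔥₂`,
then `α + β` is a root of `𝔥₁`. -/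
theorem stmt_4 {K L : Type*} [Field K] [LieRing L] [LieAlgebra K L]
    (H : LieSubalgebra K L) [H.IsCartanSubalgebra]
    (h₁ : LieSubalgebra K L) (hH : H ≤ h₁)
    (hdim : ∀ γ : H → K, IsRootOf H ⊤ γ → Module.finrank K (rootSpace H γ) = 1)
    (hbracket : ∀ α β : H → K, IsRootOf H ⊤ α → IsRootOf H ⊤ β →
      IsRootOf H ⊤ (α + β) →
      Submodule.span K {z : L | ∃ x ∈ rootSpace H α, ∃ y ∈ rootSpace H β, z = ⁅x, y⁆}
        = (rootSpace H (α + β)).toSubmodule)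
    (α β : H → K) (hα : IsRootOf H h₁ α) (hβ : IsRootOf H h₁ β)
    (hsum : IsRootOf H ⊤ (α + β)) : IsRootOf H h₁ (α + β) := by
  -- α and β are roots of the ambient algebra
  have hle_α : rootSpaceIn H h₁ α ≤ (rootSpace H α).toSubmodule := inf_le_left
  have hle_β : rootSpaceIn H h₁ β ≤ (rootSpace H β).toSubmodule := inf_le_left
  have hαtop : IsRootOf H ⊤ α := by
    refine ⟨hα.1, ?_⟩
    rw [rootSpaceIn_top]
    intro h
    exact hα.2 (le_bot_iff.mp (h ▸ hle_α))
  have hβtop : IsRootOf H ⊤ β := by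
    refine ⟨hβ.1, ?_⟩
    rw [rootSpaceIn_top]
    intro h
    exact hβ.2 (le_bot_iff.mp (h ▸ hle_β))
  -- the full root spaces of α and β lie in h₁
  have hα_sub : (rootSpace H α).toSubmodule ≤ h₁.toSubmodule := by
    have := aux_eq_of_one_dim (rootSpace H α).toSubmodule (rootSpaceIn H h₁ α)
      (hdim α hαtop) hle_α hα.2
    rw [← this]; exact inf_le_right
  have hβ_sub : (rootSpace H β).toSubmodule ≤ h₁.toSubmodule := by
    have := aux_eq_of_one_dim (rootSpace H β).toSubmodule (rootSpaceIn H h₁ β)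
      (hdim β hβtop) hle_β hβ.2
    rw [← this]; exact inf_le_right
  -- the root space of α + β lies in h₁
  have hsum_sub : (rootSpace H (α + β)).toSubmodule ≤ h₁.toSubmodule := by
    rw [← hbracket α β hαtop hβtop hsum]
    refine Submodule.span_le.mpr ?_
    rintro z ⟨x, hx, y, hy, rfl⟩
    exact h₁.lie_mem (hα_sub hx) (hβ_sub hy)
  refine ⟨hsum.1, ?_⟩
  have : rootSpaceIn H h₁ (α + β) = (rootSpace H (α + β)).toSubmodule :=
    inf_eq_left.mpr hsum_sub
  rw [this, ← rootSpaceIn_top]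
  exact hsum.2
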